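/- Let f_1, f_2 : S → ℝ be continuous and φ(λ) = ⟨f_1, λ⟩⟨f_2, λ⟩. Then for every ξ ∈ S^E, L_μ(φ ∘ m)(ξ) = ⟨A_μ f_1, m(ξ)⟩⟨f_2, m(ξ)⟩ + ⟨f_1, m(ξ)⟩⟨A_μ f_2, m(ξ)⟩ + π_diag ⟨f_1 f_2, μ⟩ − ⟨f_1, μ⟩ Σ_{x∈E} π(x)² f_2(ξ(x)) − ⟨f_2, μ⟩ Σ_{x∈E} π(x)² f_1(ξ(x)) + μ(S) Σ_{x∈E} π(x)² f_1(ξ(x)) f_2(ξ(x)), where π_diag = Σ_{x∈E} π(x)². -/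

import Mathlib

open MeasureTheory Finset

/-- Empirical measure `m(ξ) = ∑_{x∈E} π(x) δ_{ξ(x)}`. -/
noncomputable def empMeas {E S : Type*} [Fintype E] [MeasurableSpace S]
    (π : E → ℝ) (ξ : E → S) : Measure S :=
  ∑ x : E, (ENNReal.ofReal (π x)) • Measure.dirac (ξ x)

/-- Mutation generator `L_μ F(ξ) = ∑_{x∈E} ∫_S [F(ξ^{x|σ}) − F(ξ)] dμ(σ)`. -/
noncomputable def Lmu {E S : Type*} [Fintype E] [DecidableEq E] [MeasurableSpace S]
    (μ : Measure S) (F : (E → S) → ℝ) (ξ : E → S) : ℝ :=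
  ∑ x : E, ∫ σ, (F (Function.update ξ x σ) - F ξ) ∂μ

/-- Mutation operator `A_μ f(τ) = ∫_S [f(σ) − f(τ)] dμ(σ)`. -/
noncomputable def Amu {S : Type*} [MeasurableSpace S]
    (μ : Measure S) (f : S → ℝ) (τ : S) : ℝ :=
  ∫ σ, (f σ - f τ) ∂μ

lemma cont_integrable {S : Type*} [MetricSpace S] [CompactSpace S] [MeasurableSpace S]
    [BorelSpace S] (μ : Measure S) [IsFiniteMeasure μ] {f : S → ℝ} (hf : Continuous f) :
    Integrable f μ :=
  hf.integrable_of_hasCompactSupport (HasCompactSupport.of_compactSpace f)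

lemma integral_empMeas {E S : Type*} [Fintype E] [MetricSpace S] [CompactSpace S]
    [MeasurableSpace S] [BorelSpace S] (π : E → ℝ) (hπ : ∀ x, 0 ≤ π x) (ξ : E → S) {f : S → ℝ}
    (hf : Continuous f) :
    ∫ σ, f σ ∂(empMeas π ξ) = ∑ x : E, π x * f (ξ x) := by
  have hfin : ∀ x : E, IsFiniteMeasure ((ENNReal.ofReal (π x)) • Measure.dirac (ξ x)) := by
    intro x
    refine ⟨?_⟩
    simp [ENNReal.mul_lt_top, ENNReal.ofReal_lt_top]
  rw [empMeas, integral_finset_sum_measure]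
  · refine Finset.sum_congr rfl fun x _ => ?_
    rw [integral_smul_measure, integral_dirac' _ _ hf.measurable.stronglyMeasurable,
      ENNReal.toReal_ofReal (hπ x), smul_eq_mul]
  · intro x _
    exact @cont_integrable _ _ _ _ _ _ (hfin x) _ hf

lemma sum_update_pt {E : Type*} [Fintype E] [DecidableEq E] (h : E → ℝ) (x : E) (v : ℝ) :
    ∑ y, Function.update h x v y = v - h x + ∑ y, h y := by
  rw [Finset.sum_update_of_mem (Finset.mem_univ x),
    Finset.sum_eq_sum_sdiff_singleton_add (Finset.mem_univ x) h]
  ring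

/-- Corollary 2.2 (2), mutation part (eq. 2.16): for `φ(λ) = ⟨f₁,λ⟩⟨f₂,λ⟩`,
`L_μ(φ∘m)(ξ) = ⟨A_μ f₁,m(ξ)⟩⟨f₂,m(ξ)⟩ + ⟨f₁,m(ξ)⟩⟨A_μ f₂,m(ξ)⟩ + π_diag⟨f₁f₂,μ⟩
 − ⟨f₁,μ⟩ ∑_x π(x)² f₂(ξ(x)) − ⟨f₂,μ⟩ ∑_x π(x)² f₁(ξ(x)) + μ(S) ∑_x π(x)² f₁(ξ(x))f₂(ξ(x))`. -/
theorem mutation_generator_on_second_moment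
    {E S : Type*} [Fintype E] [DecidableEq E]
    [MetricSpace S] [CompactSpace S] [MeasurableSpace S] [BorelSpace S]
    (hE : 2 ≤ Fintype.card E)
    (π : E → ℝ) (μ : Measure S) [IsFiniteMeasure μ]
    (hπpos : ∀ x, 0 < π x) (hπ1 : ∑ x, π x = 1)
    (f₁ f₂ : C(S, ℝ)) (ξ : E → S) :
    Lmu μ (fun ζ => (∫ σ, f₁ σ ∂(empMeas π ζ)) * (∫ σ, f₂ σ ∂(empMeas π ζ))) ξ =
      (∫ τ, Amu μ f₁ τ ∂(empMeas π ξ)) * (∫ σ, f₂ σ ∂(empMeas π ξ)) +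
      (∫ σ, f₁ σ ∂(empMeas π ξ)) * (∫ τ, Amu μ f₂ τ ∂(empMeas π ξ)) +
      (∑ x : E, π x ^ 2) * (∫ σ, f₁ σ * f₂ σ ∂μ) -
      (∫ σ, f₁ σ ∂μ) * (∑ x : E, π x ^ 2 * f₂ (ξ x)) -
      (∫ σ, f₂ σ ∂μ) * (∑ x : E, π x ^ 2 * f₁ (ξ x)) +
      (μ Set.univ).toReal * (∑ x : E, π x ^ 2 * (f₁ (ξ x) * f₂ (ξ x))) := by
  have hπ : ∀ x, 0 ≤ π x := fun x => (hπpos x).le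
  set a : ℝ := ∑ y, π y * f₁ (ξ y) with ha
  set b : ℝ := ∑ y, π y * f₂ (ξ y) with hb
  set I1 : ℝ := ∫ σ, f₁ σ ∂μ with hI1d
  set I2 : ℝ := ∫ σ, f₂ σ ∂μ with hI2d
  set I12 : ℝ := ∫ σ, f₁ σ * f₂ σ ∂μ with hI12d
  set c : ℝ := (μ Set.univ).toReal with hcd
  have hi1 : Integrable (fun σ => f₁ σ) μ := cont_integrable μ f₁.continuous
  have hi2 : Integrable (fun σ => f₂ σ) μ := cont_integrable μ f₂.continuous
  have hi12 : Integrable (fun σ => f₁ σ * f₂ σ) μ :=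
    cont_integrable μ (f₁.continuous.mul f₂.continuous)
  -- empirical integrals after update
  have hemp : ∀ (f : C(S, ℝ)) (x : E) (σ : S),
      ∫ τ, f τ ∂(empMeas π (Function.update ξ x σ)) =
        (∑ y, π y * f (ξ y)) + π x * (f σ - f (ξ x)) := by
    intro f x σ
    rw [integral_empMeas π hπ _ f.continuous]
    have : ∀ y : E, π y * f (Function.update ξ x σ y) =
        Function.update (fun y => π y * f (ξ y)) x (π x * f σ) y := by
      intro y
      by_cases hy : y = x
      · subst hy; simp
      · simp [Function.update_of_ne hy]
    rw [Finset.sum_congr rfl fun y _ => this y, sum_update_pt]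
    ring
  -- key integral computation
  have key : ∀ c1 c2 c3 c4 : ℝ,
      ∫ σ, (c1 * f₁ σ + c2 * f₂ σ + c3 * (f₁ σ * f₂ σ) + c4) ∂μ =
        c1 * I1 + c2 * I2 + c3 * I12 + c4 * c := by
    intro c1 c2 c3 c4
    have h12 : Integrable (fun σ => c1 * f₁ σ + c2 * f₂ σ) μ :=
      (hi1.const_mul c1).add (hi2.const_mul c2)
    have h123 : Integrable (fun σ => c1 * f₁ σ + c2 * f₂ σ + c3 * (f₁ σ * f₂ σ)) μ :=
      h12.add (hi12.const_mul c3)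
    rw [integral_add h123 (integrable_const c4), integral_add h12 (hi12.const_mul c3),
      integral_add (hi1.const_mul c1) (hi2.const_mul c2),
      integral_const_mul, integral_const_mul, integral_const_mul, integral_const]
    simp only [smul_eq_mul, hI1d, hI2d, hI12d, hcd, Measure.real]
    ring
  -- base value
  have hFxi1 : ∫ σ, f₁ σ ∂(empMeas π ξ) = a := integral_empMeas π hπ ξ f₁.continuous
  have hFxi2 : ∫ σ, f₂ σ ∂(empMeas π ξ) = b := integral_empMeas π hπ ξ f₂.continuous
  -- Amu rewrite
  have hAmu : ∀ (f : C(S, ℝ)) (τ : S), Amu μ f τ = (∫ σ, f σ ∂μ) - c * f τ := by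
    intro f τ
    rw [Amu, integral_sub (cont_integrable μ f.continuous) (integrable_const _),
      integral_const, smul_eq_mul, hcd, mul_comm]
    simp only [Measure.real]; ring
  have hA1 : ∫ τ, Amu μ f₁ τ ∂(empMeas π ξ) = ∑ x, π x * (I1 - c * f₁ (ξ x)) := by
    have : (fun τ => Amu μ f₁ τ) = fun τ => I1 - c * f₁ τ := funext fun τ => hAmu f₁ τ
    rw [this, integral_empMeas π hπ ξ (by continuity)]
  have hA2 : ∫ τ, Amu μ f₂ τ ∂(empMeas π ξ) = ∑ x, π x * (I2 - c * f₂ (ξ x)) := by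
    have : (fun τ => Amu μ f₂ τ) = fun τ => I2 - c * f₂ τ := funext fun τ => hAmu f₂ τ
    rw [this, integral_empMeas π hπ ξ (by continuity)]
  -- LHS computation
  have hLHS : Lmu μ (fun ζ => (∫ σ, f₁ σ ∂(empMeas π ζ)) * (∫ σ, f₂ σ ∂(empMeas π ζ))) ξ =
      ∑ x : E, ((b * π x - π x ^ 2 * f₂ (ξ x)) * I1 + (a * π x - π x ^ 2 * f₁ (ξ x)) * I2 +
        π x ^ 2 * I12 +
        (-(a * π x * f₂ (ξ x)) - b * π x * f₁ (ξ x) + π x ^ 2 * (f₁ (ξ x) * f₂ (ξ x))) * c) := by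
    rw [Lmu]
    refine Finset.sum_congr rfl fun x _ => ?_
    have hfun : (fun σ => (∫ τ, f₁ τ ∂(empMeas π (Function.update ξ x σ))) *
          (∫ τ, f₂ τ ∂(empMeas π (Function.update ξ x σ))) -
          (∫ σ, f₁ σ ∂(empMeas π ξ)) * (∫ σ, f₂ σ ∂(empMeas π ξ))) =
        fun σ => (b * π x - π x ^ 2 * f₂ (ξ x)) * f₁ σ + (a * π x - π x ^ 2 * f₁ (ξ x)) * f₂ σ +
          π x ^ 2 * (f₁ σ * f₂ σ) +
          (-(a * π x * f₂ (ξ x)) - b * π x * f₁ (ξ x) + π x ^ 2 * (f₁ (ξ x) * f₂ (ξ x))) := by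
      funext σ
      rw [hemp f₁ x σ, hemp f₂ x σ, hFxi1, hFxi2, ← ha, ← hb]
      ring
    rw [hfun, key]
  rw [hLHS, hFxi1, hFxi2, hA1, hA2]
  rw [Finset.sum_mul, Finset.mul_sum, Finset.sum_mul, Finset.mul_sum, Finset.mul_sum,
    Finset.mul_sum]
  rw [← Finset.sum_add_distrib, ← Finset.sum_add_distrib, ← Finset.sum_sub_distrib,
    ← Finset.sum_sub_distrib, ← Finset.sum_add_distrib]
  exact Finset.sum_congr rfl fun x _ => by ring
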